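/- Define c : ℝ³ → ℝ by c(s₁,s₂,s₃) = ∫_{SO(3)} exp(s₁Q₁₁ + s₂Q₂₂ + s₃Q₃₃) dQ. For s₁ ≥ s₂ ≥ |s₃| ≥ 0, the partial derivatives of c satisfy: (a) ∂c/∂s_i + ∂c/∂s_j ≥ 0 for every (i,j,k) ∈ 𝓘 = {(1,2,3),(2,3,1),(3,1,2)}, and (b) 0 ≤ |∂c/∂s₃| ≤ ∂c/∂s₂ ≤ ∂c/∂s₁. -/

import Mathlib

open MeasureTheory Matrix Real

noncomputable section

/-- The space of real 3×3 matrices. -/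
abbrev M3 : Type := Matrix (Fin 3) (Fin 3) ℝ

instance : MeasurableSpace M3 := inferInstanceAs (MeasurableSpace (Fin 3 → Fin 3 → ℝ))

instance : BorelSpace M3 := inferInstanceAs (BorelSpace (Fin 3 → Fin 3 → ℝ))

/-- The special orthogonal group SO(3), as a set of real 3×3 matrices. -/
def SO3 : Set M3 := {R | Rᵀ * R = 1 ∧ R.det = 1}

/-- The normalizing constant as a function of the three diagonal parameters:
`c(s₁,s₂,s₃) = ∫_{SO(3)} exp(s₁Q₁₁ + s₂Q₂₂ + s₃Q₃₃) dQ`. -/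
noncomputable def cFun (μ : Measure M3) (s : Fin 3 → ℝ) : ℝ :=
  ∫ Q, Real.exp (s 0 * Q 0 0 + s 1 * Q 1 1 + s 2 * Q 2 2) ∂μ

theorem diag_abs_le {Q : M3} (hQ : Q ∈ SO3) (i : Fin 3) : |Q i i| ≤ 1 := by
  obtain ⟨h1, -⟩ := hQ
  have h := congrFun (congrFun h1 i) i
  rw [Matrix.mul_apply] at h
  simp only [Matrix.transpose_apply, Matrix.one_apply_eq] at h
  have key : Q i i * Q i i ≤ ∑ k, Q k i * Q k i :=
    Finset.single_le_sum (f := fun k => Q k i * Q k i) (fun k _ => mul_self_nonneg _)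
      (Finset.mem_univ i)
  rw [h] at key
  exact abs_le_one_iff_mul_self_le_one.mpr key

theorem ae_SO3 {μ : Measure M3} (hsupp : μ SO3ᶜ = 0) : ∀ᵐ Q ∂μ, Q ∈ SO3 := by
  rw [MeasureTheory.ae_iff]
  simpa [Set.compl_def] using hsupp

theorem int_left_inv (μ : Measure M3)
    (hleft : ∀ Q ∈ SO3, μ.map (fun R => Q * R) = μ)
    {D : M3} (hD : D ∈ SO3) (g : M3 → ℝ) (hg : Continuous g) :
    ∫ Q, g (D * Q) ∂μ = ∫ Q, g Q ∂μ := by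
  have hc : Continuous fun R : M3 => D * R := continuous_const.matrix_mul continuous_id
  have := integral_map (μ := μ) (φ := fun R => D * R) hc.aemeasurable
    (hg.aestronglyMeasurable (μ := μ.map fun R => D * R))
  rw [hleft D hD] at this
  exact this.symm

theorem int_right_inv (μ : Measure M3)
    (hright : ∀ Q ∈ SO3, μ.map (fun R => R * Q) = μ)
    {D : M3} (hD : D ∈ SO3) (g : M3 → ℝ) (hg : Continuous g) :
    ∫ Q, g (Q * D) ∂μ = ∫ Q, g Q ∂μ := by
  have hc : Continuous fun R : M3 => R * D := continuous_id.matrix_mul continuous_const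
  have := integral_map (μ := μ) (φ := fun R => R * D) hc.aemeasurable
    (hg.aestronglyMeasurable (μ := μ.map fun R => R * D))
  rw [hright D hD] at this
  exact this.symm

theorem int_conj_inv (μ : Measure M3)
    (hleft : ∀ Q ∈ SO3, μ.map (fun R => Q * R) = μ)
    (hright : ∀ Q ∈ SO3, μ.map (fun R => R * Q) = μ)
    {P : M3} (hP : P ∈ SO3) (g : M3 → ℝ) (hg : Continuous g) :
    ∫ Q, g (P * Q * P) ∂μ = ∫ Q, g Q ∂μ := by
  have h1 : ∫ Q, g (P * Q * P) ∂μ = ∫ Q, g (P * Q) ∂μ := by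
    have := int_right_inv μ hright hP (fun Q => g (P * Q))
      (hg.comp (continuous_const.matrix_mul continuous_id))
    simpa [mul_assoc] using this
  rw [h1, int_left_inv μ hleft hP g hg]

theorem integrable_gen (μ : Measure M3) [IsProbabilityMeasure μ] (hsupp : μ SO3ᶜ = 0)
    (f : M3 → ℝ) (hf : Continuous f) (C : ℝ) (hC : ∀ Q ∈ SO3, |f Q| ≤ C) :
    Integrable f μ := by
  refine Integrable.mono' (integrable_const C) hf.aestronglyMeasurable ?_
  filter_upwards [ae_SO3 hsupp] with Q hQ
  simpa using hC Q hQ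

theorem scalar_core (t A B c w : ℝ) (h : 0 ≤ t * (A + B)) :
    0 ≤ t * exp (A + c * w) + -t * exp (-A + c * w) + t * exp (B + c * w)
      + -t * exp (-B + c * w) := by
  rw [exp_add, exp_add, exp_add, exp_add]
  have ew : 0 < exp (c * w) := exp_pos _
  have key : 0 ≤ t * (exp A - exp (-B) + (exp B - exp (-A))) := by
    rcases le_or_gt 0 t with ht | ht
    · rcases ht.eq_or_lt.imp Eq.symm id with heq | ht
      · simp [heq]
      · have hs : 0 ≤ A + B := by nlinarith
        have e1 := exp_le_exp.mpr (by linarith : -B ≤ A)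
        have e2 := exp_le_exp.mpr (by linarith : -A ≤ B)
        nlinarith
    · have hs : A + B ≤ 0 := by nlinarith
      have e1 := exp_le_exp.mpr (by linarith : A ≤ -B)
      have e2 := exp_le_exp.mpr (by linarith : B ≤ -A)
      nlinarith
  nlinarith [mul_nonneg key ew.le]

theorem scalar_diff (a b c u v w : ℝ) (hab : b ≤ a) :
    0 ≤ (u - v) * exp (a * u + b * v + c * w) + (v - u) * exp (a * v + b * u + c * w) := by
  rcases le_or_gt v u with h | h
  · have h1 : a * v + b * u ≤ a * u + b * v := by nlinarith
    have := exp_le_exp.mpr (add_le_add h1 (le_refl (c * w)))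
    nlinarith
  · have h1 : a * u + b * v ≤ a * v + b * u := by nlinarith
    have := exp_le_exp.mpr (add_le_add h1 (le_refl (c * w)))
    nlinarith

theorem scalar_sum (a b c u v w : ℝ) (hab : 0 ≤ a + b) :
    0 ≤ (u + v) * exp (a * u + b * v + c * w) + (-u + -v) * exp (a * -u + b * -v + c * w)
      + (v + u) * exp (a * v + b * u + c * w) + (-v + -u) * exp (a * -v + b * -u + c * w) := by
  have e1 : a * -u + b * -v + c * w = -(a * u + b * v) + c * w := by ring
  have e2 : a * -v + b * -u + c * w = -(a * v + b * u) + c * w := by ring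
  have e3 : (-u : ℝ) + -v = -(u + v) := by ring
  have e4 : (v : ℝ) + u = u + v := by ring
  have e5 : (-v : ℝ) + -u = -(u + v) := by ring
  have e6 : a * u + b * v + c * w = (a * u + b * v) + c * w := by ring
  have e7 : a * v + b * u + c * w = (a * v + b * u) + c * w := by ring
  rw [e1, e2, e3, e4, e5, e6, e7]
  refine scalar_core (u + v) (a * u + b * v) (a * v + b * u) c w ?_
  have he : (u + v) * (a * u + b * v + (a * v + b * u)) = (a + b) * ((u + v) * (u + v)) := by
    ring
  rw [he]
  exact mul_nonneg hab (mul_self_nonneg _)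

theorem cont_entry (i j : Fin 3) : Continuous fun Q : M3 => Q i j :=
  (continuous_apply j).comp (continuous_apply i)

theorem abs_mul_exp_le {x y X Y : ℝ} (hx : |x| ≤ X) (hy : y ≤ Y) : |x * exp y| ≤ X * exp Y := by
  rw [abs_mul, abs_exp]
  exact mul_le_mul hx (exp_le_exp.mpr hy) (exp_pos _).le ((abs_nonneg _).trans hx)

theorem mul_le_abs_of_abs_le {t z : ℝ} (hz : |z| ≤ 1) : t * z ≤ |t| := by
  calc t * z ≤ |t * z| := le_abs_self _
    _ = |t| * |z| := abs_mul _ _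
    _ ≤ |t| := mul_le_of_le_one_right (abs_nonneg t) hz

theorem master_sum (μ : Measure M3) [IsProbabilityMeasure μ] (hsupp : μ SO3ᶜ = 0)
    (hleft : ∀ Q ∈ SO3, μ.map (fun R => Q * R) = μ)
    (hright : ∀ Q ∈ SO3, μ.map (fun R => R * Q) = μ)
    (s : Fin 3 → ℝ) (i j k : Fin 3)
    (hperm : ∀ f : Fin 3 → ℝ, f 0 + f 1 + f 2 = f i + f j + f k)
    (hs : 0 ≤ s i + s j)
    (N P : M3) (hN : N ∈ SO3) (hP : P ∈ SO3)
    (hNi : ∀ Q : M3, (N * Q) i i = -(Q i i)) (hNj : ∀ Q : M3, (N * Q) j j = -(Q j j))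
    (hNk : ∀ Q : M3, (N * Q) k k = Q k k)
    (hPi : ∀ Q : M3, (P * Q * P) i i = Q j j) (hPj : ∀ Q : M3, (P * Q * P) j j = Q i i)
    (hPk : ∀ Q : M3, (P * Q * P) k k = Q k k) :
    0 ≤ ∫ Q, (Q i i + Q j j) * exp (s 0 * Q 0 0 + s 1 * Q 1 1 + s 2 * Q 2 2) ∂μ := by
  set E : M3 → ℝ := fun Q => s 0 * Q 0 0 + s 1 * Q 1 1 + s 2 * Q 2 2 with hE
  have hEeq : ∀ Q : M3, E Q = s i * Q i i + s j * Q j j + s k * Q k k := fun Q =>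
    hperm (fun m => s m * Q m m)
  have hEcont : Continuous E := by
    apply Continuous.add
    apply Continuous.add
    · exact continuous_const.mul (cont_entry 0 0)
    · exact continuous_const.mul (cont_entry 1 1)
    · exact continuous_const.mul (cont_entry 2 2)
  set g : M3 → ℝ := fun Q => (Q i i + Q j j) * exp (E Q) with hg
  have hgcont : Continuous g := ((cont_entry i i).add (cont_entry j j)).mul hEcont.rexp
  set g1 : M3 → ℝ := fun Q => g (N * Q) with hg1
  set g2 : M3 → ℝ := fun Q => g (P * Q * P) with hg2
  set g3 : M3 → ℝ := fun Q => g (N * (P * Q * P)) with hg3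
  have hg1c : Continuous g1 := hgcont.comp (continuous_const.matrix_mul continuous_id)
  have hconjc : Continuous fun Q : M3 => P * Q * P :=
    (continuous_const.matrix_mul continuous_id).matrix_mul continuous_const
  have hg2c : Continuous g2 := hgcont.comp hconjc
  have hg3c : Continuous g3 := hgcont.comp ((continuous_const.matrix_mul continuous_id).comp hconjc)
  -- explicit forms
  have f0 : ∀ Q : M3, g Q = (Q i i + Q j j) * exp (s i * Q i i + s j * Q j j + s k * Q k k) := by
    intro Q
    show (Q i i + Q j j) * exp (E Q) = _
    rw [hEeq]
  have f1 : ∀ Q : M3, g1 Q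
      = (-(Q i i) + -(Q j j)) * exp (s i * -(Q i i) + s j * -(Q j j) + s k * Q k k) := by
    intro Q
    show g (N * Q) = _
    rw [f0 (N * Q), hNi, hNj, hNk]
  have f2 : ∀ Q : M3, g2 Q
      = (Q j j + Q i i) * exp (s i * Q j j + s j * Q i i + s k * Q k k) := by
    intro Q
    show g (P * Q * P) = _
    rw [f0 (P * Q * P), hPi, hPj, hPk]
  have f3 : ∀ Q : M3, g3 Q
      = (-(Q j j) + -(Q i i)) * exp (s i * -(Q j j) + s j * -(Q i i) + s k * Q k k) := by
    intro Q
    show g (N * (P * Q * P)) = _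
    rw [f0 (N * (P * Q * P)), hNi, hNj, hNk, hPi, hPj, hPk]
  -- integral equalities
  have hI1 : ∫ Q, g1 Q ∂μ = ∫ Q, g Q ∂μ := int_left_inv μ hleft hN g hgcont
  have hI2 : ∫ Q, g2 Q ∂μ = ∫ Q, g Q ∂μ := int_conj_inv μ hleft hright hP g hgcont
  have hI3 : ∫ Q, g3 Q ∂μ = ∫ Q, g Q ∂μ := by
    have h := int_conj_inv μ hleft hright hP (fun Q => g (N * Q))
      (hgcont.comp (continuous_const.matrix_mul continuous_id))
    exact h.trans hI1
  -- integrability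
  set M : ℝ := |s i| + |s j| + |s k| with hM
  have hbound : ∀ (u v w : ℝ), |u| ≤ 1 → |v| ≤ 1 → |w| ≤ 1 →
      |(u + v) * exp (s i * u + s j * v + s k * w)| ≤ 2 * exp M := by
    intro u v w hu hv hw
    apply abs_mul_exp_le
    · calc |u + v| ≤ |u| + |v| := abs_add_le _ _
        _ ≤ 2 := by linarith
    · exact add_le_add (add_le_add (mul_le_abs_of_abs_le hu) (mul_le_abs_of_abs_le hv))
        (mul_le_abs_of_abs_le hw)
  have habs1 : ∀ (x : ℝ), |x| ≤ 1 → |(-x)| ≤ 1 := by intro x hx; rwa [abs_neg]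
  have hint : Integrable g μ := by
    apply integrable_gen μ hsupp g hgcont (2 * exp M)
    intro Q hQ
    rw [f0]
    exact hbound _ _ _ (diag_abs_le hQ i) (diag_abs_le hQ j) (diag_abs_le hQ k)
  have hint1 : Integrable g1 μ := by
    apply integrable_gen μ hsupp g1 hg1c (2 * exp M)
    intro Q hQ
    rw [f1]
    have := hbound _ _ _ (habs1 _ (diag_abs_le hQ i)) (habs1 _ (diag_abs_le hQ j))
      (diag_abs_le hQ k)
    convert this using 3 <;> ring
  have hint2 : Integrable g2 μ := by
    apply integrable_gen μ hsupp g2 hg2c (2 * exp M)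
    intro Q hQ
    rw [f2]
    exact hbound _ _ _ (diag_abs_le hQ j) (diag_abs_le hQ i) (diag_abs_le hQ k)
  have hint3 : Integrable g3 μ := by
    apply integrable_gen μ hsupp g3 hg3c (2 * exp M)
    intro Q hQ
    rw [f3]
    have := hbound _ _ _ (habs1 _ (diag_abs_le hQ j)) (habs1 _ (diag_abs_le hQ i))
      (diag_abs_le hQ k)
    convert this using 3 <;> ring
  -- pointwise positivity of the average
  have hptw : ∀ Q : M3, 0 ≤ g Q + g1 Q + g2 Q + g3 Q := by
    intro Q
    rw [f0, f1, f2, f3]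
    exact scalar_sum (s i) (s j) (s k) (Q i i) (Q j j) (Q k k) hs
  have hpt : 0 ≤ ∫ Q, (g Q + g1 Q + g2 Q + g3 Q) ∂μ := integral_nonneg hptw
  have hsplit : ∫ Q, (g Q + g1 Q + g2 Q + g3 Q) ∂μ
      = (∫ Q, g Q ∂μ) + (∫ Q, g1 Q ∂μ) + (∫ Q, g2 Q ∂μ) + (∫ Q, g3 Q ∂μ) := by
    have h3 := integral_add ((hint.add hint1).add hint2) hint3
    have h2 := integral_add (hint.add hint1) hint2
    have h1 := integral_add hint hint1
    simp only [Pi.add_apply] at h3 h2 h1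
    rw [h3, h2, h1]
  rw [hsplit, hI1, hI2, hI3] at hpt
  have : 0 ≤ 4 * ∫ Q, g Q ∂μ := by linarith
  linarith

theorem master_diff (μ : Measure M3) [IsProbabilityMeasure μ] (hsupp : μ SO3ᶜ = 0)
    (hleft : ∀ Q ∈ SO3, μ.map (fun R => Q * R) = μ)
    (hright : ∀ Q ∈ SO3, μ.map (fun R => R * Q) = μ)
    (s : Fin 3 → ℝ) (i j k : Fin 3)
    (hperm : ∀ f : Fin 3 → ℝ, f 0 + f 1 + f 2 = f i + f j + f k)
    (hs : s j ≤ s i)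
    (P : M3) (hP : P ∈ SO3)
    (hPi : ∀ Q : M3, (P * Q * P) i i = Q j j) (hPj : ∀ Q : M3, (P * Q * P) j j = Q i i)
    (hPk : ∀ Q : M3, (P * Q * P) k k = Q k k) :
    0 ≤ ∫ Q, (Q i i - Q j j) * exp (s 0 * Q 0 0 + s 1 * Q 1 1 + s 2 * Q 2 2) ∂μ := by
  set E : M3 → ℝ := fun Q => s 0 * Q 0 0 + s 1 * Q 1 1 + s 2 * Q 2 2 with hE
  have hEeq : ∀ Q : M3, E Q = s i * Q i i + s j * Q j j + s k * Q k k := fun Q =>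
    hperm (fun m => s m * Q m m)
  have hEcont : Continuous E := by
    apply Continuous.add
    apply Continuous.add
    · exact continuous_const.mul (cont_entry 0 0)
    · exact continuous_const.mul (cont_entry 1 1)
    · exact continuous_const.mul (cont_entry 2 2)
  set g : M3 → ℝ := fun Q => (Q i i - Q j j) * exp (E Q) with hg
  have hgcont : Continuous g := ((cont_entry i i).sub (cont_entry j j)).mul hEcont.rexp
  set g2 : M3 → ℝ := fun Q => g (P * Q * P) with hg2
  have hconjc : Continuous fun Q : M3 => P * Q * P :=
    (continuous_const.matrix_mul continuous_id).matrix_mul continuous_const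
  have hg2c : Continuous g2 := hgcont.comp hconjc
  have f0 : ∀ Q : M3, g Q = (Q i i - Q j j) * exp (s i * Q i i + s j * Q j j + s k * Q k k) := by
    intro Q
    show (Q i i - Q j j) * exp (E Q) = _
    rw [hEeq]
  have f2 : ∀ Q : M3, g2 Q
      = (Q j j - Q i i) * exp (s i * Q j j + s j * Q i i + s k * Q k k) := by
    intro Q
    show g (P * Q * P) = _
    rw [f0 (P * Q * P), hPi, hPj, hPk]
  have hI2 : ∫ Q, g2 Q ∂μ = ∫ Q, g Q ∂μ := int_conj_inv μ hleft hright hP g hgcont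
  set M : ℝ := |s i| + |s j| + |s k| with hM
  have hbound : ∀ (u v w : ℝ), |u| ≤ 1 → |v| ≤ 1 → |w| ≤ 1 →
      |(u - v) * exp (s i * u + s j * v + s k * w)| ≤ 2 * exp M := by
    intro u v w hu hv hw
    apply abs_mul_exp_le
    · calc |u - v| ≤ |u| + |v| := abs_sub _ _
        _ ≤ 2 := by linarith
    · exact add_le_add (add_le_add (mul_le_abs_of_abs_le hu) (mul_le_abs_of_abs_le hv))
        (mul_le_abs_of_abs_le hw)
  have hint : Integrable g μ := by
    apply integrable_gen μ hsupp g hgcont (2 * exp M)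
    intro Q hQ
    rw [f0]
    exact hbound _ _ _ (diag_abs_le hQ i) (diag_abs_le hQ j) (diag_abs_le hQ k)
  have hint2 : Integrable g2 μ := by
    apply integrable_gen μ hsupp g2 hg2c (2 * exp M)
    intro Q hQ
    rw [f2]
    exact hbound _ _ _ (diag_abs_le hQ j) (diag_abs_le hQ i) (diag_abs_le hQ k)
  have hptw : ∀ Q : M3, 0 ≤ g Q + g2 Q := by
    intro Q
    rw [f0, f2]
    exact scalar_diff (s i) (s j) (s k) (Q i i) (Q j j) (Q k k) hs
  have hpt : 0 ≤ ∫ Q, (g Q + g2 Q) ∂μ := integral_nonneg hptw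
  have h1 := integral_add hint hint2
  rw [h1, hI2] at hpt
  linarith

noncomputable def dexp (s : Fin 3 → ℝ) (Q : M3) : ℝ :=
  Real.exp (s 0 * Q 0 0 + s 1 * Q 1 1 + s 2 * Q 2 2)

noncomputable def LQ (Q : M3) : (Fin 3 → ℝ) →L[ℝ] ℝ :=
  Q 0 0 • ContinuousLinearMap.proj 0 + Q 1 1 • ContinuousLinearMap.proj 1
    + Q 2 2 • ContinuousLinearMap.proj 2

theorem LQ_apply (Q : M3) (v : Fin 3 → ℝ) :
    LQ Q v = Q 0 0 * v 0 + Q 1 1 * v 1 + Q 2 2 * v 2 := by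
  simp [LQ, ContinuousLinearMap.proj_apply, smul_eq_mul]

theorem LQ_norm_le (Q : M3) : ‖LQ Q‖ ≤ |Q 0 0| + |Q 1 1| + |Q 2 2| := by
  apply ContinuousLinearMap.opNorm_le_bound _ (by positivity)
  intro v
  rw [LQ_apply]
  have h0 : |v 0| ≤ ‖v‖ := norm_le_pi_norm v 0
  have h1 : |v 1| ≤ ‖v‖ := norm_le_pi_norm v 1
  have h2 : |v 2| ≤ ‖v‖ := norm_le_pi_norm v 2
  calc ‖Q 0 0 * v 0 + Q 1 1 * v 1 + Q 2 2 * v 2‖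
      ≤ |Q 0 0 * v 0| + |Q 1 1 * v 1| + |Q 2 2 * v 2| := by
        apply (abs_add_le _ _).trans; gcongr; exact abs_add_le _ _
    _ = |Q 0 0| * |v 0| + |Q 1 1| * |v 1| + |Q 2 2| * |v 2| := by rw [abs_mul, abs_mul, abs_mul]
    _ ≤ |Q 0 0| * ‖v‖ + |Q 1 1| * ‖v‖ + |Q 2 2| * ‖v‖ := by
        gcongr <;> positivity
    _ = (|Q 0 0| + |Q 1 1| + |Q 2 2|) * ‖v‖ := by ring

theorem LQ_cont : Continuous fun Q : M3 => LQ Q := by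
  apply Continuous.add
  apply Continuous.add
  · exact (cont_entry 0 0).smul continuous_const
  · exact (cont_entry 1 1).smul continuous_const
  · exact (cont_entry 2 2).smul continuous_const

theorem dexp_cont (s : Fin 3 → ℝ) : Continuous (dexp s) := by
  apply Continuous.rexp
  apply Continuous.add
  apply Continuous.add
  · exact continuous_const.mul (cont_entry 0 0)
  · exact continuous_const.mul (cont_entry 1 1)
  · exact continuous_const.mul (cont_entry 2 2)

theorem inner_hasFDeriv (Q : M3) (x : Fin 3 → ℝ) :
    HasFDerivAt (fun y : Fin 3 → ℝ => y 0 * Q 0 0 + y 1 * Q 1 1 + y 2 * Q 2 2) (LQ Q) x := by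
  have h : (fun y : Fin 3 → ℝ => y 0 * Q 0 0 + y 1 * Q 1 1 + y 2 * Q 2 2)
      = fun y => LQ Q y := by
    funext y; rw [LQ_apply]; ring
  rw [h]
  exact (LQ Q).hasFDerivAt

theorem dexp_hasFDeriv (Q : M3) (x : Fin 3 → ℝ) :
    HasFDerivAt (fun y => dexp y Q) (dexp x Q • LQ Q) x :=
  (inner_hasFDeriv Q x).exp

theorem dexp_le {x : Fin 3 → ℝ} {Q : M3} (hQ : Q ∈ SO3) {C : ℝ} (hC : ‖x‖ ≤ C) :
    dexp x Q ≤ exp (3 * C) := by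
  apply exp_le_exp.mpr
  have h : ∀ m : Fin 3, x m * Q m m ≤ C := by
    intro m
    have h1 : |x m| ≤ C := (norm_le_pi_norm x m).trans hC
    have := mul_le_abs_of_abs_le (t := x m) (diag_abs_le hQ m)
    calc x m * Q m m ≤ |x m| := this
      _ ≤ C := h1
  linarith [h 0, h 1, h 2]

theorem key_deriv (μ : Measure M3) [IsProbabilityMeasure μ] (hsupp : μ SO3ᶜ = 0)
    (s : Fin 3 → ℝ) :
    HasFDerivAt (cFun μ) (∫ Q, dexp s Q • LQ Q ∂μ) s
      ∧ Integrable (fun Q => dexp s Q • LQ Q) μ := by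
  have hC : (0:ℝ) < ‖s‖ + 1 := by positivity
  set bound : M3 → ℝ := fun _ => 3 * exp (3 * (‖s‖ + 1)) with hbdef
  have hF'meas : ∀ x : Fin 3 → ℝ, AEStronglyMeasurable (fun Q => dexp x Q • LQ Q) μ :=
    fun x => ((dexp_cont x).smul LQ_cont).aestronglyMeasurable
  have hF'bound : ∀ᵐ Q ∂μ, ∀ x ∈ Metric.ball s 1, ‖dexp x Q • LQ Q‖ ≤ bound Q := by
    filter_upwards [ae_SO3 hsupp] with Q hQ
    intro x hx
    have hxn : ‖x‖ ≤ ‖s‖ + 1 := by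
      have := mem_ball_iff_norm.mp hx
      calc ‖x‖ = ‖x - s + s‖ := by rw [sub_add_cancel]
        _ ≤ ‖x - s‖ + ‖s‖ := norm_add_le _ _
        _ ≤ ‖s‖ + 1 := by linarith
    refine (norm_smul_le (dexp x Q) (LQ Q)).trans ?_
    have h1 : ‖dexp x Q‖ ≤ exp (3 * (‖s‖ + 1)) := by
      rw [Real.norm_eq_abs, abs_of_pos (show (0:ℝ) < dexp x Q from exp_pos _)]
      exact dexp_le hQ hxn
    have h2 : ‖LQ Q‖ ≤ 3 := by
      refine (LQ_norm_le Q).trans ?_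
      linarith [diag_abs_le hQ 0, diag_abs_le hQ 1, diag_abs_le hQ 2]
    calc ‖dexp x Q‖ * ‖LQ Q‖ ≤ exp (3 * (‖s‖ + 1)) * 3 :=
          mul_le_mul h1 h2 (norm_nonneg _) (exp_pos _).le
      _ = bound Q := by rw [hbdef]; ring
  have hInt : Integrable (fun Q => dexp s Q • LQ Q) μ := by
    refine Integrable.mono' (integrable_const (3 * exp (3 * (‖s‖ + 1)))) (hF'meas s) ?_
    filter_upwards [hF'bound] with Q hQ
    exact hQ s (Metric.mem_ball_self one_pos)
  constructor
  · have := hasFDerivAt_integral_of_dominated_of_fderiv_le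
      (F := fun x Q => dexp x Q) (F' := fun x Q => dexp x Q • LQ Q) (x₀ := s)
      (bound := bound) (Metric.ball_mem_nhds s one_pos)
      (Filter.Eventually.of_forall fun x => (dexp_cont x).aestronglyMeasurable)
      (integrable_gen μ hsupp (dexp s) (dexp_cont s) (exp (3 * (‖s‖ + 1)))
        (fun Q hQ => by
          rw [abs_of_pos (show (0:ℝ) < dexp s Q from exp_pos _)]
          exact dexp_le hQ (by linarith)))
      (hF'meas s) hF'bound (integrable_const _)
      (Filter.Eventually.of_forall fun Q x _ => dexp_hasFDeriv Q x)
    exact this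
  · exact hInt

theorem fderiv_cFun_apply (μ : Measure M3) [IsProbabilityMeasure μ] (hsupp : μ SO3ᶜ = 0)
    (s : Fin 3 → ℝ) (i : Fin 3) :
    fderiv ℝ (cFun μ) s (Pi.single i 1) = ∫ Q, Q i i * dexp s Q ∂μ := by
  obtain ⟨hd, hint⟩ := key_deriv μ hsupp s
  rw [hd.fderiv, ContinuousLinearMap.integral_apply hint]
  congr 1
  funext Q
  rw [ContinuousLinearMap.smul_apply, LQ_apply, smul_eq_mul]
  fin_cases i <;> simp [Pi.single_apply] <;> ring

theorem int_diag (μ : Measure M3) [IsProbabilityMeasure μ] (hsupp : μ SO3ᶜ = 0)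
    (s : Fin 3 → ℝ) (m : Fin 3) : Integrable (fun Q => Q m m * dexp s Q) μ := by
  apply integrable_gen μ hsupp (fun Q => Q m m * dexp s Q) ((cont_entry m m).mul (dexp_cont s)) (exp (3 * (‖s‖ + 1)))
  intro Q hQ
  rw [abs_mul, abs_of_pos (show (0:ℝ) < dexp s Q from exp_pos _)]
  have h1 := diag_abs_le hQ m
  have h2 : dexp s Q ≤ exp (3 * (‖s‖ + 1)) := dexp_le hQ (by linarith [norm_nonneg s])
  calc |Q m m| * dexp s Q ≤ 1 * exp (3 * (‖s‖ + 1)) :=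
        mul_le_mul h1 h2 (exp_pos _).le one_pos.le
    _ = exp (3 * (‖s‖ + 1)) := one_mul _

theorem sum_int (μ : Measure M3) [IsProbabilityMeasure μ] (hsupp : μ SO3ᶜ = 0)
    (s : Fin 3 → ℝ) (i j : Fin 3) :
    (∫ Q, Q i i * dexp s Q ∂μ) + (∫ Q, Q j j * dexp s Q ∂μ)
      = ∫ Q, (Q i i + Q j j) * dexp s Q ∂μ := by
  rw [← integral_add (int_diag μ hsupp s i) (int_diag μ hsupp s j)]
  congr 1
  funext Q
  ring

theorem diff_int (μ : Measure M3) [IsProbabilityMeasure μ] (hsupp : μ SO3ᶜ = 0)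
    (s : Fin 3 → ℝ) (i j : Fin 3) :
    (∫ Q, Q i i * dexp s Q ∂μ) - (∫ Q, Q j j * dexp s Q ∂μ)
      = ∫ Q, (Q i i - Q j j) * dexp s Q ∂μ := by
  rw [← integral_sub (int_diag μ hsupp s i) (int_diag μ hsupp s j)]
  congr 1
  funext Q
  ring

/-- For `s₁ ≥ s₂ ≥ |s₃| ≥ 0`, the function
`c(s₁,s₂,s₃) = ∫_{SO(3)} exp(s₁Q₁₁+s₂Q₂₂+s₃Q₃₃) dQ` (integral with respect to the
Haar probability measure on SO(3)) is differentiable and its partial derivatives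
satisfy (a) `∂c/∂sᵢ + ∂c/∂sⱼ ≥ 0` for every cyclic shift `(i,j,k)` of `(1,2,3)`, and
(b) `0 ≤ |∂c/∂s₃| ≤ ∂c/∂s₂ ≤ ∂c/∂s₁`. -/
theorem matrixFisher_normalizing_deriv_ineq
    (μ : Measure M3) [IsProbabilityMeasure μ] (hsupp : μ SO3ᶜ = 0)
    (hleft : ∀ Q ∈ SO3, μ.map (fun R => Q * R) = μ)
    (hright : ∀ Q ∈ SO3, μ.map (fun R => R * Q) = μ)
    (s₁ s₂ s₃ : ℝ) (h12 : s₁ ≥ s₂) (h23 : s₂ ≥ |s₃|) :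
    DifferentiableAt ℝ (cFun μ) ![s₁, s₂, s₃] ∧
    (∀ i j k : Fin 3,
      ((i, j, k) ∈ ({(0, 1, 2), (1, 2, 0), (2, 0, 1)} : Set (Fin 3 × Fin 3 × Fin 3))) →
      0 ≤ fderiv ℝ (cFun μ) ![s₁, s₂, s₃] (Pi.single i 1) +
          fderiv ℝ (cFun μ) ![s₁, s₂, s₃] (Pi.single j 1)) ∧
    (0 ≤ |fderiv ℝ (cFun μ) ![s₁, s₂, s₃] (Pi.single 2 1)| ∧
      |fderiv ℝ (cFun μ) ![s₁, s₂, s₃] (Pi.single 2 1)| ≤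
        fderiv ℝ (cFun μ) ![s₁, s₂, s₃] (Pi.single 1 1) ∧
      fderiv ℝ (cFun μ) ![s₁, s₂, s₃] (Pi.single 1 1) ≤
        fderiv ℝ (cFun μ) ![s₁, s₂, s₃] (Pi.single 0 1)) := by
  set s : Fin 3 → ℝ := ![s₁, s₂, s₃] with hsdef
  have hs0 : s 0 = s₁ := rfl
  have hs1 : s 1 = s₂ := rfl
  have hs2 : s 2 = s₃ := rfl
  have habs0 : (0:ℝ) ≤ |s₃| := abs_nonneg _
  have h3le : s₃ ≤ |s₃| := le_abs_self _
  have h3ge : -|s₃| ≤ s₃ := neg_abs_le _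
  have hD : ∀ m : Fin 3, fderiv ℝ (cFun μ) s (Pi.single m 1) = ∫ Q, Q m m * dexp s Q ∂μ :=
    fun m => fderiv_cFun_apply μ hsupp s m
  -- the three sum inequalities
  have hsimp : ∀ (A : M3) (a b : Fin 3) (Q : M3), (A * Q * A) a b = (A * Q * A) a b := fun _ _ _ _ => rfl
  have hS01 : 0 ≤ ∫ Q, (Q 0 0 + Q 1 1) * dexp s Q ∂μ := by
    refine master_sum μ hsupp hleft hright s 0 1 2 (fun f => rfl)
      (by rw [hs0, hs1]; linarith)
      !![(-1:ℝ),0,0; 0,-1,0; 0,0,1] !![(0:ℝ),1,0; 1,0,0; 0,0,-1] ?_ ?_ ?_ ?_ ?_ ?_ ?_ ?_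
    · constructor
      · have ht : (!![(-1:ℝ),0,0; 0,-1,0; 0,0,1])ᵀ = !![(-1:ℝ),0,0; 0,-1,0; 0,0,1] := by
          ext i j; fin_cases i <;> fin_cases j <;> rfl
        rw [ht]
        ext i j
        fin_cases i <;> fin_cases j <;>
          simp [Matrix.mul_apply, Fin.sum_univ_three, Matrix.one_fin_three,
            Matrix.vecHead, Matrix.vecTail]
      · simp [Matrix.det_fin_three]
    · constructor
      · have ht : (!![(0:ℝ),1,0; 1,0,0; 0,0,-1])ᵀ = !![(0:ℝ),1,0; 1,0,0; 0,0,-1] := by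
          ext i j; fin_cases i <;> fin_cases j <;> rfl
        rw [ht]
        ext i j
        fin_cases i <;> fin_cases j <;>
          simp [Matrix.mul_apply, Fin.sum_univ_three, Matrix.one_fin_three,
            Matrix.vecHead, Matrix.vecTail]
      · simp [Matrix.det_fin_three]
    all_goals
      intro Q
      simp [Matrix.mul_apply, Fin.sum_univ_three, Matrix.vecHead, Matrix.vecTail,
        Matrix.vecMul, dotProduct]
  have hS12 : 0 ≤ ∫ Q, (Q 1 1 + Q 2 2) * dexp s Q ∂μ := by
    refine master_sum μ hsupp hleft hright s 1 2 0 (fun f => by ring)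
      (by rw [hs1, hs2]; linarith)
      !![(1:ℝ),0,0; 0,-1,0; 0,0,-1] !![(-1:ℝ),0,0; 0,0,1; 0,1,0] ?_ ?_ ?_ ?_ ?_ ?_ ?_ ?_
    · constructor
      · have ht : (!![(1:ℝ),0,0; 0,-1,0; 0,0,-1])ᵀ = !![(1:ℝ),0,0; 0,-1,0; 0,0,-1] := by
          ext i j; fin_cases i <;> fin_cases j <;> rfl
        rw [ht]
        ext i j
        fin_cases i <;> fin_cases j <;>
          simp [Matrix.mul_apply, Fin.sum_univ_three, Matrix.one_fin_three,
            Matrix.vecHead, Matrix.vecTail]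
      · simp [Matrix.det_fin_three]
    · constructor
      · have ht : (!![(-1:ℝ),0,0; 0,0,1; 0,1,0])ᵀ = !![(-1:ℝ),0,0; 0,0,1; 0,1,0] := by
          ext i j; fin_cases i <;> fin_cases j <;> rfl
        rw [ht]
        ext i j
        fin_cases i <;> fin_cases j <;>
          simp [Matrix.mul_apply, Fin.sum_univ_three, Matrix.one_fin_three,
            Matrix.vecHead, Matrix.vecTail]
      · simp [Matrix.det_fin_three]
    all_goals
      intro Q
      simp [Matrix.mul_apply, Fin.sum_univ_three, Matrix.vecHead, Matrix.vecTail,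
        Matrix.vecMul, dotProduct]
  have hS20 : 0 ≤ ∫ Q, (Q 2 2 + Q 0 0) * dexp s Q ∂μ := by
    refine master_sum μ hsupp hleft hright s 2 0 1 (fun f => by ring)
      (by rw [hs2, hs0]; linarith)
      !![(-1:ℝ),0,0; 0,1,0; 0,0,-1] !![(0:ℝ),0,1; 0,-1,0; 1,0,0] ?_ ?_ ?_ ?_ ?_ ?_ ?_ ?_
    · constructor
      · have ht : (!![(-1:ℝ),0,0; 0,1,0; 0,0,-1])ᵀ = !![(-1:ℝ),0,0; 0,1,0; 0,0,-1] := by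
          ext i j; fin_cases i <;> fin_cases j <;> rfl
        rw [ht]
        ext i j
        fin_cases i <;> fin_cases j <;>
          simp [Matrix.mul_apply, Fin.sum_univ_three, Matrix.one_fin_three,
            Matrix.vecHead, Matrix.vecTail]
      · simp [Matrix.det_fin_three]
    · constructor
      · have ht : (!![(0:ℝ),0,1; 0,-1,0; 1,0,0])ᵀ = !![(0:ℝ),0,1; 0,-1,0; 1,0,0] := by
          ext i j; fin_cases i <;> fin_cases j <;> rfl
        rw [ht]
        ext i j
        fin_cases i <;> fin_cases j <;>
          simp [Matrix.mul_apply, Fin.sum_univ_three, Matrix.one_fin_three,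
            Matrix.vecHead, Matrix.vecTail]
      · simp [Matrix.det_fin_three]
    all_goals
      intro Q
      simp [Matrix.mul_apply, Fin.sum_univ_three, Matrix.vecHead, Matrix.vecTail,
        Matrix.vecMul, dotProduct]
  -- the two difference inequalities
  have hd01 : 0 ≤ ∫ Q, (Q 0 0 - Q 1 1) * dexp s Q ∂μ := by
    refine master_diff μ hsupp hleft hright s 0 1 2 (fun f => rfl)
      (by rw [hs0, hs1]; exact h12)
      !![(0:ℝ),1,0; 1,0,0; 0,0,-1] ?_ ?_ ?_ ?_
    · constructor
      · have ht : (!![(0:ℝ),1,0; 1,0,0; 0,0,-1])ᵀ = !![(0:ℝ),1,0; 1,0,0; 0,0,-1] := by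
          ext i j; fin_cases i <;> fin_cases j <;> rfl
        rw [ht]
        ext i j
        fin_cases i <;> fin_cases j <;>
          simp [Matrix.mul_apply, Fin.sum_univ_three, Matrix.one_fin_three,
            Matrix.vecHead, Matrix.vecTail]
      · simp [Matrix.det_fin_three]
    all_goals
      intro Q
      simp [Matrix.mul_apply, Fin.sum_univ_three, Matrix.vecHead, Matrix.vecTail,
        Matrix.vecMul, dotProduct]
  have hd12 : 0 ≤ ∫ Q, (Q 1 1 - Q 2 2) * dexp s Q ∂μ := by
    refine master_diff μ hsupp hleft hright s 1 2 0 (fun f => by ring)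
      (by rw [hs1, hs2]; linarith)
      !![(-1:ℝ),0,0; 0,0,1; 0,1,0] ?_ ?_ ?_ ?_
    · constructor
      · have ht : (!![(-1:ℝ),0,0; 0,0,1; 0,1,0])ᵀ = !![(-1:ℝ),0,0; 0,0,1; 0,1,0] := by
          ext i j; fin_cases i <;> fin_cases j <;> rfl
        rw [ht]
        ext i j
        fin_cases i <;> fin_cases j <;>
          simp [Matrix.mul_apply, Fin.sum_univ_three, Matrix.one_fin_three,
            Matrix.vecHead, Matrix.vecTail]
      · simp [Matrix.det_fin_three]
    all_goals
      intro Q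
      simp [Matrix.mul_apply, Fin.sum_univ_three, Matrix.vecHead, Matrix.vecTail,
        Matrix.vecMul, dotProduct]
  refine ⟨(key_deriv μ hsupp s).1.differentiableAt, ?_, ?_⟩
  · intro i j k hmem
    simp only [Set.mem_insert_iff, Set.mem_singleton_iff, Prod.mk.injEq] at hmem
    rcases hmem with ⟨hi, hj, hk⟩ | ⟨hi, hj, hk⟩ | ⟨hi, hj, hk⟩ <;> subst hi <;> subst hj <;>
      rw [hD, hD, sum_int μ hsupp s]
    · exact hS01
    · exact hS12
    · exact hS20
  · have e12 : fderiv ℝ (cFun μ) s (Pi.single 1 1) + fderiv ℝ (cFun μ) s (Pi.single 2 1)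
        = ∫ Q, (Q 1 1 + Q 2 2) * dexp s Q ∂μ := by
      rw [hD, hD, sum_int μ hsupp s]
    have d12 : fderiv ℝ (cFun μ) s (Pi.single 1 1) - fderiv ℝ (cFun μ) s (Pi.single 2 1)
        = ∫ Q, (Q 1 1 - Q 2 2) * dexp s Q ∂μ := by
      rw [hD, hD, diff_int μ hsupp s]
    have d01 : fderiv ℝ (cFun μ) s (Pi.single 0 1) - fderiv ℝ (cFun μ) s (Pi.single 1 1)
        = ∫ Q, (Q 0 0 - Q 1 1) * dexp s Q ∂μ := by
      rw [hD, hD, diff_int μ hsupp s]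
    refine ⟨abs_nonneg _, abs_le.mpr ⟨by linarith, by linarith⟩, by linarith⟩

end
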